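/- For all v, w ∈ ℝ^d, the R-modules A_v and A_w are isomorphic if and only if there exists m ∈ ℤ^d with (C+v) ∩ ℤ^d = m + ((C+w) ∩ ℤ^d) (equivalently, ⌈n_i(v)⌉ = n_i(m) + ⌈n_i(w)⌉ for all i = 1,…,t; equivalently, the chamber of constancy of v is the translate by m of the chamber of constancy of w). -/

import Mathlib

open Set

set_option synthInstance.maxHeartbeats 400000
set_option maxHeartbeats 1000000

noncomputable section

/-- The embedding of the lattice `ℤ^d` into `ℝ^d`. -/
def ιZ (d : ℕ) (m : Fin d → ℤ) : Fin d → ℝ := fun j => (m j : ℝ)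

/-- The lattice points of the translated cone `C + v`, where
`C = {x | ∀ i, 0 ≤ n i x}`. -/
def latticePts {d t : ℕ} (n : Fin t → ((Fin d → ℝ) →ₗ[ℝ] ℝ)) (v : Fin d → ℝ) :
    Set (Fin d → ℤ) :=
  {m | ∀ i, 0 ≤ n i (ιZ d m - v)}

/-- The toric algebra `R = k[C ∩ ℤ^d]`: the `k`-subalgebra of the Laurent
polynomial algebra `L = AddMonoidAlgebra k (Fin d → ℤ)` spanned (equivalently,
generated, since the monomial set is closed under multiplication and contains `1`)
by the monomials `x^m` with `m ∈ C ∩ ℤ^d`. -/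
def toricR (k : Type) [Field k] (d t : ℕ) (n : Fin t → ((Fin d → ℝ) →ₗ[ℝ] ℝ)) :
    Subalgebra k (AddMonoidAlgebra k (Fin d → ℤ)) :=
  Algebra.adjoin k
    {f | ∃ m : Fin d → ℤ, (∀ i, 0 ≤ n i (ιZ d m)) ∧ f = AddMonoidAlgebra.single m 1}

/-- The conic module `A_v`: the `R`-submodule of `L` spanned by the monomials `x^m`
with `m ∈ (C + v) ∩ ℤ^d`. -/
def conicA (k : Type) [Field k] (d t : ℕ) (n : Fin t → ((Fin d → ℝ) →ₗ[ℝ] ℝ))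
    (v : Fin d → ℝ) :
    Submodule ↥(toricR k d t n) (AddMonoidAlgebra k (Fin d → ℤ)) :=
  Submodule.span ↥(toricR k d t n)
    {f | ∃ m : Fin d → ℤ, (∀ i, 0 ≤ n i (ιZ d m - v)) ∧ f = AddMonoidAlgebra.single m 1}

/-! ### Auxiliary material -/

namespace Stmt7Aux

/-- The set of monomials with exponents in `S`. -/
def monSet (k : Type) [Field k] {d : ℕ} (S : Set (Fin d → ℤ)) :
    Set (AddMonoidAlgebra k (Fin d → ℤ)) :=
  {f | ∃ m, m ∈ S ∧ f = AddMonoidAlgebra.single m 1}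

variable {k : Type} [Field k] {d t : ℕ}

lemma ιZ_add (a b : Fin d → ℤ) : ιZ d (a + b) = ιZ d a + ιZ d b := by
  funext j; simp [ιZ]

lemma single_ne (p : Fin d → ℤ) : (AddMonoidAlgebra.single p (1:k) : AddMonoidAlgebra k (Fin d → ℤ)) ≠ 0 :=
  by
  classical
  intro h0
  have := congrArg (fun f => f.coeff p) h0
  simp [AddMonoidAlgebra.coeff_single] at this

lemma single_mul (p q : Fin d → ℤ) :
    (AddMonoidAlgebra.single p (1:k)) * AddMonoidAlgebra.single q 1
      = AddMonoidAlgebra.single (p + q) 1 := by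
  rw [AddMonoidAlgebra.single_mul_single, one_mul]

/-- cancellation by a monomial -/
lemma single_cancel {p : Fin d → ℤ} {x y : AddMonoidAlgebra k (Fin d → ℤ)}
    (h : AddMonoidAlgebra.single p 1 * x = AddMonoidAlgebra.single p 1 * y) : x = y := by
  have h2 := congrArg (fun z => AddMonoidAlgebra.single (-p) (1:k) * z) h
  simp only [← mul_assoc, AddMonoidAlgebra.single_mul_single, one_mul, neg_add_cancel] at h2
  rwa [← AddMonoidAlgebra.one_def, one_mul, one_mul] at h2

/-- multiply through a monomial with known inverse data -/
lemma eq_of_single_mul {e q : Fin d → ℤ} {c : k} (hc : c ≠ 0)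
    {g : AddMonoidAlgebra k (Fin d → ℤ)}
    (h : AddMonoidAlgebra.single e c * g = AddMonoidAlgebra.single q 1) :
    g = c⁻¹ • AddMonoidAlgebra.single (q - e) 1 := by
  have h2 := congrArg (fun z => AddMonoidAlgebra.single (-e) (c⁻¹ : k) * z) h
  simp only [← mul_assoc, AddMonoidAlgebra.single_mul_single, neg_add_cancel,
    inv_mul_cancel₀ hc] at h2
  rw [← AddMonoidAlgebra.one_def, one_mul] at h2
  rw [h2, AddMonoidAlgebra.smul_single, smul_eq_mul, mul_one]
  congr 1
  abel

section order

lemma mul_apply_max_aux {B : Type} [LinearOrder B] [AddCommMonoid B] [IsOrderedCancelAddMonoid B]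
    {f g : AddMonoidAlgebra k B} (hf : f ≠ 0) (hg : g ≠ 0) :
    (f * g).coeff (f.coeff.support.max' (Finsupp.support_nonempty_iff.2 (mt AddMonoidAlgebra.coeff_eq_zero.1 hf)) +
             g.coeff.support.max' (Finsupp.support_nonempty_iff.2 (mt AddMonoidAlgebra.coeff_eq_zero.1 hg))) =
      f.coeff (f.coeff.support.max' (Finsupp.support_nonempty_iff.2 (mt AddMonoidAlgebra.coeff_eq_zero.1 hf))) *
      g.coeff (g.coeff.support.max' (Finsupp.support_nonempty_iff.2 (mt AddMonoidAlgebra.coeff_eq_zero.1 hg))) := by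
  classical
  set Mf := f.coeff.support.max' (Finsupp.support_nonempty_iff.2 (mt AddMonoidAlgebra.coeff_eq_zero.1 hf)) with hMf
  set Mg := g.coeff.support.max' (Finsupp.support_nonempty_iff.2 (mt AddMonoidAlgebra.coeff_eq_zero.1 hg)) with hMg
  rw [AddMonoidAlgebra.coeff_mul, Finsupp.sum]
  rw [Finset.sum_eq_single Mf]
  · rw [Finsupp.sum, Finset.sum_eq_single Mg]
    · rw [if_pos rfl]
    · intro b hb hbne
      exact if_neg (fun he => hbne (add_left_cancel he))
    · intro h; exact absurd (g.coeff.support.max'_mem _) h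
  · intro a ha hane
    rw [Finsupp.sum]
    apply Finset.sum_eq_zero
    intro b hb
    refine if_neg (fun he => ?_)
    have h1 : a < Mf := lt_of_le_of_ne (Finset.le_max' _ _ ha) hane
    have h2 : b ≤ Mg := Finset.le_max' _ _ hb
    exact (add_lt_add_of_lt_of_le h1 h2).ne he
  · intro h; exact absurd (f.coeff.support.max'_mem _) h

lemma mul_apply_min_aux {B : Type} [LinearOrder B] [AddCommMonoid B] [IsOrderedCancelAddMonoid B]
    {f g : AddMonoidAlgebra k B} (hf : f ≠ 0) (hg : g ≠ 0) :
    (f * g).coeff (f.coeff.support.min' (Finsupp.support_nonempty_iff.2 (mt AddMonoidAlgebra.coeff_eq_zero.1 hf)) +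
             g.coeff.support.min' (Finsupp.support_nonempty_iff.2 (mt AddMonoidAlgebra.coeff_eq_zero.1 hg))) =
      f.coeff (f.coeff.support.min' (Finsupp.support_nonempty_iff.2 (mt AddMonoidAlgebra.coeff_eq_zero.1 hf))) *
      g.coeff (g.coeff.support.min' (Finsupp.support_nonempty_iff.2 (mt AddMonoidAlgebra.coeff_eq_zero.1 hg))) := by
  classical
  set Mf := f.coeff.support.min' (Finsupp.support_nonempty_iff.2 (mt AddMonoidAlgebra.coeff_eq_zero.1 hf)) with hMf
  set Mg := g.coeff.support.min' (Finsupp.support_nonempty_iff.2 (mt AddMonoidAlgebra.coeff_eq_zero.1 hg)) with hMg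
  rw [AddMonoidAlgebra.coeff_mul, Finsupp.sum]
  rw [Finset.sum_eq_single Mf]
  · rw [Finsupp.sum, Finset.sum_eq_single Mg]
    · rw [if_pos rfl]
    · intro b hb hbne
      exact if_neg (fun he => hbne (add_left_cancel he))
    · intro h; exact absurd (g.coeff.support.min'_mem _) h
  · intro a ha hane
    rw [Finsupp.sum]
    apply Finset.sum_eq_zero
    intro b hb
    refine if_neg (fun he => ?_)
    have h1 : Mf < a := lt_of_le_of_ne (Finset.min'_le _ _ ha) (Ne.symm hane)
    have h2 : Mg ≤ b := Finset.min'_le _ _ hb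
    exact (add_lt_add_of_lt_of_le h1 h2).ne' he
  · intro h; exact absurd (f.coeff.support.min'_mem _) h

lemma left_single_of_mul_single {B : Type} [LinearOrder B] [AddCommMonoid B] [IsOrderedCancelAddMonoid B]
    {f g : AddMonoidAlgebra k B} (hf : f ≠ 0) (hg : g ≠ 0) {q : B} {c : k}
    (h : f * g = AddMonoidAlgebra.single q c) :
    ∃ (b : B) (c' : k), c' ≠ 0 ∧ f = AddMonoidAlgebra.single b c' := by
  classical
  have hfs := Finsupp.support_nonempty_iff.2 (mt AddMonoidAlgebra.coeff_eq_zero.1 hf)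
  have hgs := Finsupp.support_nonempty_iff.2 (mt AddMonoidAlgebra.coeff_eq_zero.1 hg)
  set Mf := f.coeff.support.max' hfs
  set Mg := g.coeff.support.max' hgs
  set mf := f.coeff.support.min' hfs
  set mg := g.coeff.support.min' hgs
  have hMne : f.coeff Mf * g.coeff Mg ≠ 0 :=
    mul_ne_zero (Finsupp.mem_support_iff.1 (f.coeff.support.max'_mem hfs))
      (Finsupp.mem_support_iff.1 (g.coeff.support.max'_mem hgs))
  have hmne : f.coeff mf * g.coeff mg ≠ 0 :=
    mul_ne_zero (Finsupp.mem_support_iff.1 (f.coeff.support.min'_mem hfs))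
      (Finsupp.mem_support_iff.1 (g.coeff.support.min'_mem hgs))
  have hM : Mf + Mg ∈ (f * g).coeff.support := by
    rw [Finsupp.mem_support_iff, mul_apply_max_aux hf hg]; exact hMne
  have hm : mf + mg ∈ (f * g).coeff.support := by
    rw [Finsupp.mem_support_iff, mul_apply_min_aux hf hg]; exact hmne
  rw [h, AddMonoidAlgebra.coeff_single] at hM hm
  have hM' : Mf + Mg = q := by simpa using Finsupp.support_single_subset hM
  have hm' : mf + mg = q := by simpa using Finsupp.support_single_subset hm
  have hle1 : mf ≤ Mf := Finset.min'_le _ _ (f.coeff.support.max'_mem hfs)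
  have hle2 : mg ≤ Mg := Finset.min'_le _ _ (g.coeff.support.max'_mem hgs)
  have heq : Mf = mf := by
    by_contra hne
    have h1 : mf < Mf := lt_of_le_of_ne hle1 (Ne.symm hne)
    have h2 : mf + mg < Mf + Mg := add_lt_add_of_lt_of_le h1 hle2
    rw [hM', hm'] at h2
    exact h2.false
  have hsupp : f.coeff.support = {Mf} := by
    apply Finset.eq_singleton_iff_unique_mem.2
    refine ⟨f.coeff.support.max'_mem hfs, fun x hx => le_antisymm (Finset.le_max' _ _ hx) ?_⟩
    rw [heq]; exact Finset.min'_le _ _ hx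
  exact ⟨Mf, f.coeff Mf, Finsupp.mem_support_iff.1 (f.coeff.support.max'_mem hfs),
    AddMonoidAlgebra.coeff_injective (by
      rw [AddMonoidAlgebra.coeff_single]; exact (Finsupp.support_eq_singleton.1 hsupp).2)⟩

def lexEquiv (d : ℕ) : (Fin d → ℤ) ≃+ Lex (Fin d → ℤ) :=
  { Equiv.refl _ with map_add' := fun _ _ => rfl }

lemma single_of_mul_single
    {f g : AddMonoidAlgebra k (Fin d → ℤ)} (hf : f ≠ 0) (hg : g ≠ 0)
    {q : Fin d → ℤ} {c : k} (h : f * g = AddMonoidAlgebra.single q c) :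
    ∃ (b : Fin d → ℤ) (c' : k), c' ≠ 0 ∧ f = AddMonoidAlgebra.single b c' := by
  classical
  haveI : WellFoundedLT (Fin d) := Finite.to_wellFoundedLT
  let ψ := AddMonoidAlgebra.domCongr k k (lexEquiv d)
  have hψf : ψ f ≠ 0 := fun h0 => hf (by simpa using congrArg ψ.symm h0)
  have hψg : ψ g ≠ 0 := fun h0 => hg (by simpa using congrArg ψ.symm h0)
  have hmul : ψ f * ψ g = AddMonoidAlgebra.single (lexEquiv d q) c := by
    rw [← map_mul, h]
    exact AddMonoidAlgebra.domCongr_single _ _ _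
  obtain ⟨b, c', hc', hb⟩ :
      ∃ (b : Lex (Fin d → ℤ)) (c' : k), c' ≠ 0 ∧ ψ f = AddMonoidAlgebra.single b c' :=
    left_single_of_mul_single hψf hψg hmul
  refine ⟨(lexEquiv d).symm b, c', hc', ?_⟩
  have h2 : ψ.symm (ψ f) = ψ.symm (AddMonoidAlgebra.single b c') := by rw [hb]
  rw [ψ.symm_apply_apply] at h2
  rw [h2]
  rw [AddMonoidAlgebra.domCongr_symm, AddMonoidAlgebra.domCongr_single]

end order

section spans

variable (n : Fin t → ((Fin d → ℝ) →ₗ[ℝ] ℝ))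

lemma latticePts_add {m p : Fin d → ℤ} {v : Fin d → ℝ}
    (hm : ∀ i, 0 ≤ n i (ιZ d m)) (hp : p ∈ latticePts n v) :
    m + p ∈ latticePts n v := by
  intro i
  have he : ιZ d (m + p) - v = ιZ d m + (ιZ d p - v) := by rw [ιZ_add]; abel
  rw [he, map_add]
  exact add_nonneg (hm i) (hp i)

lemma mulLeft_single_span {S T : Set (Fin d → ℤ)} {c : Fin d → ℤ}
    (h : ∀ p ∈ S, c + p ∈ T) {x : AddMonoidAlgebra k (Fin d → ℤ)}
    (hx : x ∈ Submodule.span k (monSet k S)) :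
    AddMonoidAlgebra.single c (1:k) * x ∈ Submodule.span k (monSet k T) := by
  have hle : Submodule.map (LinearMap.mulLeft k (AddMonoidAlgebra.single c (1:k)))
      (Submodule.span k (monSet k S)) ≤ Submodule.span k (monSet k T) := by
    rw [Submodule.map_span, Submodule.span_le]
    rintro y ⟨f, ⟨m, hm, rfl⟩, rfl⟩
    simp only [LinearMap.mulLeft_apply]
    rw [single_mul]
    exact Submodule.subset_span ⟨c + m, h m hm, rfl⟩
  exact hle ⟨x, hx, rfl⟩

lemma toricR_smul_mem {v : Fin d → ℝ} {r x : AddMonoidAlgebra k (Fin d → ℤ)}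
    (hr : r ∈ toricR k d t n) (hx : x ∈ Submodule.span k (monSet k (latticePts n v))) :
    r * x ∈ Submodule.span k (monSet k (latticePts n v)) := by
  set W := Submodule.span k (monSet k (latticePts n v)) with hW
  revert x
  have : ∀ x ∈ W, r * x ∈ W := by
    refine Algebra.adjoin_induction
      (p := fun r _ => ∀ x ∈ W, r * x ∈ W) ?_ ?_ ?_ ?_ hr
    · rintro f ⟨m, hm, rfl⟩ x hx
      exact mulLeft_single_span (fun p hp => latticePts_add n hm hp) hx
    · intro c x hx
      rw [Algebra.algebraMap_eq_smul_one, smul_mul_assoc, one_mul]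
      exact W.smul_mem c hx
    · intro a b _ _ ha hb x hx
      rw [add_mul]
      exact W.add_mem (ha x hx) (hb x hx)
    · intro a b _ _ ha hb x hx
      rw [mul_assoc]
      exact ha _ (hb x hx)
  exact fun x => this x

/-- The conic module, as a set, is the `k`-span of its monomials. -/
lemma conicA_coe (v : Fin d → ℝ) :
    (conicA k d t n v : Set (AddMonoidAlgebra k (Fin d → ℤ)))
      = ↑(Submodule.span k (monSet k (latticePts n v))) := by
  apply subset_antisymm
  · let W : Submodule ↥(toricR k d t n) (AddMonoidAlgebra k (Fin d → ℤ)) :=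
      { carrier := Submodule.span k (monSet k (latticePts n v))
        add_mem' := fun ha hb => Submodule.add_mem _ ha hb
        zero_mem' := Submodule.zero_mem _
        smul_mem' := fun r x hx => toricR_smul_mem n r.2 hx }
    have hle : conicA k d t n v ≤ W := by
      rw [conicA, Submodule.span_le]
      rintro f ⟨m, hm, rfl⟩
      exact Submodule.subset_span ⟨m, hm, rfl⟩
    exact fun x hx => hle hx
  · have hle : Submodule.span k (monSet k (latticePts n v))
        ≤ Submodule.restrictScalars k (conicA k d t n v) := by
      rw [Submodule.span_le]
      rintro f ⟨m, hm, rfl⟩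
      exact Submodule.subset_span ⟨m, hm, rfl⟩
    exact fun x hx => hle hx

lemma single_mem_span_monSet_iff {S : Set (Fin d → ℤ)} {p : Fin d → ℤ} :
    AddMonoidAlgebra.single p (1:k) ∈ Submodule.span k (monSet k S) ↔ p ∈ S := by
  classical
  constructor
  · intro h
    by_contra hp
    let U : Submodule k (AddMonoidAlgebra k (Fin d → ℤ)) :=
      { carrier := {f | f.coeff p = 0}
        add_mem' := fun {a b} ha hb => by
          simp only [Set.mem_setOf_eq] at ha hb ⊢
          rw [AddMonoidAlgebra.coeff_add, Finsupp.add_apply, ha, hb, add_zero]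
        zero_mem' := rfl
        smul_mem' := fun c {x} hx => by
          simp only [Set.mem_setOf_eq] at hx ⊢
          rw [AddMonoidAlgebra.coeff_smul, Finsupp.smul_apply, hx, smul_zero] }
    have hle : Submodule.span k (monSet k S) ≤ U := by
      rw [Submodule.span_le]
      rintro f ⟨m, hm, rfl⟩
      have hmp : m ≠ p := fun he => hp (he ▸ hm)
      show (AddMonoidAlgebra.single m (1:k)).coeff p = 0
      rw [AddMonoidAlgebra.coeff_single, Finsupp.single_apply, if_neg hmp]
    have := hle h
    have h1 : (AddMonoidAlgebra.single p (1:k)).coeff p = 0 := this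
    rw [AddMonoidAlgebra.coeff_single, Finsupp.single_apply, if_pos rfl] at h1
    exact one_ne_zero h1
  · intro h
    exact Submodule.subset_span ⟨p, h, rfl⟩

end spans

section deep

lemma exists_deep {d t : ℕ} (n : Fin t → ((Fin d → ℝ) →ₗ[ℝ] ℝ)) (hne : ∀ i, n i ≠ 0)
    (hfull : (interior {x : Fin d → ℝ | ∀ i, 0 ≤ n i x}).Nonempty) (b : Fin t → ℝ) :
    ∃ s : Fin d → ℤ, ∀ i, b i ≤ n i (ιZ d s) := by
  classical
  -- Step 1: a point where all functionals are positive
  obtain ⟨u, hu⟩ : ∃ u : Fin d → ℝ, ∀ i, 0 < n i u := by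
    obtain ⟨u0, hu0⟩ := hfull
    obtain ⟨ε, hε, hball⟩ := Metric.isOpen_iff.1 isOpen_interior u0 hu0
    have hC0 : ∀ y ∈ Metric.ball u0 ε, ∀ i, 0 ≤ n i y := fun y hy i =>
      (interior_subset (hball hy)) i
    refine ⟨u0, fun i => ?_⟩
    by_contra hle
    push_neg at hle
    have h0 : n i u0 = 0 :=
      le_antisymm hle ((interior_subset hu0) i)
    have hzero : ∀ y : Fin d → ℝ, n i y = 0 := by
      intro y
      rcases eq_or_ne y 0 with rfl | hy0
      · simp
      have hny : (0:ℝ) < ‖y‖ := norm_pos_iff.2 hy0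
      set δ := ε / (2 * ‖y‖) with hδ
      have hδpos : 0 < δ := div_pos hε (by positivity)
      have hmem : ∀ (c : ℝ), |c| ≤ δ → u0 + c • y ∈ Metric.ball u0 ε := by
        intro c hc
        rw [Metric.mem_ball, dist_eq_norm]
        have : u0 + c • y - u0 = c • y := by abel
        rw [this, norm_smul]
        calc ‖c‖ * ‖y‖ ≤ δ * ‖y‖ := by
              apply mul_le_mul_of_nonneg_right _ (norm_nonneg y)
              simpa using hc
          _ = ε / 2 := by
              rw [hδ]; field_simp
          _ < ε := by linarith
      have h1 : 0 ≤ n i (u0 + δ • y) := hC0 _ (hmem δ (by rw [abs_of_pos hδpos])) i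
      have h2 : 0 ≤ n i (u0 + (-δ) • y) := hC0 _ (hmem (-δ) (by rw [abs_neg, abs_of_pos hδpos])) i
      rw [map_add, h0, zero_add, map_smul, smul_eq_mul] at h1 h2
      have h3 : 0 ≤ n i y := nonneg_of_mul_nonneg_right h1 hδpos
      have h4 : n i y ≤ 0 := by nlinarith
      linarith
    exact hne i (LinearMap.ext fun y => by rw [hzero y]; rfl)
  -- Step 2: bound on the unit cube
  set K : Fin t → ℝ := fun i => ∑ j, |n i fun j' => if j = j' then (1:ℝ) else 0| with hK
  have hbox : ∀ i (z : Fin d → ℝ), (∀ j, |z j| ≤ 1) → |n i z| ≤ K i := by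
    intro i z hz
    rw [LinearMap.pi_apply_eq_sum_univ (n i) z]
    refine (Finset.abs_sum_le_sum_abs _ _).trans ?_
    apply Finset.sum_le_sum
    intro j _
    rw [smul_eq_mul, abs_mul]
    calc |z j| * |n i fun j' => if j = j' then (1:ℝ) else 0|
          ≤ 1 * |n i fun j' => if j = j' then (1:ℝ) else 0| :=
          mul_le_mul_of_nonneg_right (hz j) (abs_nonneg _)
      _ = |n i fun j' => if j = j' then (1:ℝ) else 0| := one_mul _
  -- Step 3: choose a large positive scalar
  obtain ⟨l0, hl0⟩ := Finite.exists_le (fun i => (b i + K i) / n i u)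
  set l := max l0 0 with hl
  have hlnn : 0 ≤ l := le_max_right _ _
  have hlb : ∀ i, b i + K i ≤ l * n i u := by
    intro i
    have h1 : (b i + K i) / n i u ≤ l := le_trans (hl0 i) (le_max_left _ _)
    calc b i + K i = (b i + K i) / n i u * n i u := by
          rw [div_mul_cancel₀ _ (hu i).ne']
      _ ≤ l * n i u := mul_le_mul_of_nonneg_right h1 (hu i).le
  -- Step 4: the floor point
  refine ⟨fun j => ⌊l * u j⌋, fun i => ?_⟩
  have hdecomp : ιZ d (fun j => ⌊l * u j⌋) = l • u + (ιZ d (fun j => ⌊l * u j⌋) - l • u) := by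
    abel
  rw [hdecomp, map_add, map_smul, smul_eq_mul]
  have herr : |n i (ιZ d (fun j => ⌊l * u j⌋) - l • u)| ≤ K i := by
    apply hbox
    intro j
    rw [abs_le]
    constructor
    · simp only [ιZ, Pi.sub_apply, Pi.smul_apply, smul_eq_mul]
      have := Int.sub_one_lt_floor (l * u j)
      linarith [Int.floor_le (l * u j)]
    · simp only [ιZ, Pi.sub_apply, Pi.smul_apply, smul_eq_mul]
      linarith [Int.floor_le (l * u j)]
  have := neg_abs_le (n i (ιZ d (fun j => ⌊l * u j⌋) - l • u))
  have h5 := hlb i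
  linarith

end deep

section main

variable {k : Type} [Field k] {d t : ℕ} (n : Fin t → ((Fin d → ℝ) →ₗ[ℝ] ℝ))

lemma conicA_eq_span (v : Fin d → ℝ) :
    conicA k d t n v = Submodule.span ↥(toricR k d t n) (monSet k (latticePts n v)) := rfl

lemma mem_conicA_iff {v : Fin d → ℝ} {x : AddMonoidAlgebra k (Fin d → ℤ)} :
    x ∈ conicA k d t n v ↔ x ∈ Submodule.span k (monSet k (latticePts n v)) :=
  Set.ext_iff.1 (conicA_coe n v) x

lemma mul_single_inv {p : Fin d → ℤ} {c0 : k} (hc0 : c0 ≠ 0)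
    {b : AddMonoidAlgebra k (Fin d → ℤ)} {q : Fin d → ℤ} {c : k}
    (h : AddMonoidAlgebra.single p c0 * b = AddMonoidAlgebra.single q c) :
    b = c0⁻¹ • AddMonoidAlgebra.single (q - p) c := by
  have h2 := congrArg (fun z => AddMonoidAlgebra.single (-p) (c0⁻¹ : k) * z) h
  simp only [← mul_assoc, AddMonoidAlgebra.single_mul_single, neg_add_cancel,
    inv_mul_cancel₀ hc0] at h2
  rw [← AddMonoidAlgebra.one_def, one_mul] at h2
  rw [h2, AddMonoidAlgebra.smul_single, smul_eq_mul]
  congr 1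
  abel

lemma single_one_mem_of_single {W : Submodule k (AddMonoidAlgebra k (Fin d → ℤ))}
    {q : Fin d → ℤ} {c : k} (hc : c ≠ 0) (h : AddMonoidAlgebra.single q c ∈ W) :
    AddMonoidAlgebra.single q (1:k) ∈ W := by
  have h2 := W.smul_mem c⁻¹ h
  rwa [AddMonoidAlgebra.smul_single, smul_eq_mul, inv_mul_cancel₀ hc] at h2

lemma easy_dir {v w : Fin d → ℝ} (m : Fin d → ℤ)
    (hS : latticePts n v = (fun m' => m + m') '' latticePts n w) :
    Nonempty (↥(conicA k d t n v) ≃ₗ[↥(toricR k d t n)] ↥(conicA k d t n w)) := by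
  classical
  set R := toricR k d t n with hRdef
  set L := AddMonoidAlgebra k (Fin d → ℤ)
  have h1 : (AddMonoidAlgebra.single (-m) (1:k)) * AddMonoidAlgebra.single m 1 = (1:L) := by
    rw [single_mul, neg_add_cancel, ← AddMonoidAlgebra.one_def]
  have h2 : (AddMonoidAlgebra.single m (1:k)) * AddMonoidAlgebra.single (-m) 1 = (1:L) := by
    rw [single_mul, add_neg_cancel, ← AddMonoidAlgebra.one_def]
  let e : L ≃ₗ[↥R] L :=
    LinearEquiv.ofLinear (LinearMap.mulLeft ↥R (AddMonoidAlgebra.single (-m) (1:k)))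
      (LinearMap.mulLeft ↥R (AddMonoidAlgebra.single m (1:k)))
      (by
        ext x
        simp only [LinearMap.coe_comp, Function.comp_apply, LinearMap.mulLeft_apply,
          LinearMap.id_coe, id_eq]
        rw [← mul_assoc, h1, one_mul])
      (by
        ext x
        simp only [LinearMap.coe_comp, Function.comp_apply, LinearMap.mulLeft_apply,
          LinearMap.id_coe, id_eq]
        rw [← mul_assoc, h2, one_mul])
  have hmap : Submodule.map (e : L →ₗ[↥R] L) (conicA k d t n v) = conicA k d t n w := by
    rw [conicA_eq_span, conicA_eq_span, Submodule.map_span]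
    congr 1
    ext f
    constructor
    · rintro ⟨g, ⟨p, hp, rfl⟩, rfl⟩
      rw [hS] at hp
      obtain ⟨p', hp', rfl⟩ := hp
      refine ⟨p', hp', ?_⟩
      show AddMonoidAlgebra.single (-m) (1:k) * AddMonoidAlgebra.single (m + p') 1
        = AddMonoidAlgebra.single p' 1
      rw [single_mul]
      congr 1
      abel
    · rintro ⟨p', hp', rfl⟩
      refine ⟨AddMonoidAlgebra.single (m + p') 1,
        ⟨m + p', by rw [hS]; exact ⟨p', hp', rfl⟩, rfl⟩, ?_⟩
      show AddMonoidAlgebra.single (-m) (1:k) * AddMonoidAlgebra.single (m + p') 1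
        = AddMonoidAlgebra.single p' 1
      rw [single_mul]
      congr 1
      abel
  exact ⟨(e.submoduleMap (conicA k d t n v)).trans (LinearEquiv.ofEq _ _ hmap)⟩

lemma hard_dir (hne : ∀ i, n i ≠ 0)
    (hfull : (interior {x : Fin d → ℝ | ∀ i, 0 ≤ n i x}).Nonempty) {v w : Fin d → ℝ}
    (φ : ↥(conicA k d t n v) ≃ₗ[↥(toricR k d t n)] ↥(conicA k d t n w)) :
    ∃ m : Fin d → ℤ, latticePts n v = (fun m' => m + m') '' latticePts n w := by
  classical
  set R := toricR k d t n with hRdef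
  set L := AddMonoidAlgebra k (Fin d → ℤ) with hLdef
  -- deep lattice points
  obtain ⟨s, hs⟩ := exists_deep n hne hfull (fun i => -(n i v))
  obtain ⟨p0, hp0⟩ : ∃ p0, p0 ∈ latticePts n v := by
    obtain ⟨p0, h⟩ := exists_deep n hne hfull (fun i => n i v)
    exact ⟨p0, fun i => by have := h i; rw [map_sub]; linarith⟩
  obtain ⟨q0, hq0⟩ : ∃ q0, q0 ∈ latticePts n w := by
    obtain ⟨q0, h⟩ := exists_deep n hne hfull (fun i => n i w)
    exact ⟨q0, fun i => by have := h i; rw [map_sub]; linarith⟩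
  -- multiplication by x^s maps A_v into R
  have hsR : ∀ x ∈ conicA k d t n v, AddMonoidAlgebra.single s (1:k) * x ∈ R := by
    intro x hx
    have hx' : x ∈ Submodule.span k (monSet k (latticePts n v)) := (mem_conicA_iff n).1 hx
    have h2 : AddMonoidAlgebra.single s (1:k) * x
        ∈ Submodule.span k (monSet k {m : Fin d → ℤ | ∀ i, 0 ≤ n i (ιZ d m)}) := by
      refine mulLeft_single_span (fun p hp => ?_) hx'
      intro i
      rw [ιZ_add, map_add]
      have h1 := hs i
      have h2 := hp i
      rw [map_sub] at h2
      linarith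
    have hle : Submodule.span k (monSet k {m : Fin d → ℤ | ∀ i, 0 ≤ n i (ιZ d m)})
        ≤ Subalgebra.toSubmodule R := by
      rw [Submodule.span_le]
      rintro f ⟨m', hm', rfl⟩
      exact Algebra.subset_adjoin ⟨m', hm', rfl⟩
    exact hle h2
  -- key commutation identity
  have key : ∀ a a' : ↥(conicA k d t n v),
      (a' : L) * ↑(φ a) = (a : L) * ↑(φ a') := by
    intro a a'
    set r : ↥R := ⟨AddMonoidAlgebra.single s 1 * (a : L), hsR _ a.2⟩ with hr
    set r' : ↥R := ⟨AddMonoidAlgebra.single s 1 * (a' : L), hsR _ a'.2⟩ with hr'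
    have h1 : r' • a = r • a' := by
      apply Subtype.ext
      show (r' : L) * (a : L) = (r : L) * (a' : L)
      show (AddMonoidAlgebra.single s 1 * (a' : L)) * (a : L)
        = (AddMonoidAlgebra.single s 1 * (a : L)) * (a' : L)
      ring
    have h2 : (↑(φ (r' • a)) : L) = (↑(φ (r • a')) : L) := by rw [h1]
    rw [map_smul, map_smul] at h2
    have h3 : (↑(r' • φ a) : L) = (r' : L) * ↑(φ a) := rfl
    have h4 : (↑(r • φ a') : L) = (r : L) * ↑(φ a') := rfl
    simp only [h3, h4] at h2
    have h5 : AddMonoidAlgebra.single s 1 * ((a' : L) * (φ a).val)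
        = AddMonoidAlgebra.single s 1 * ((a : L) * (φ a').val) := by
      rw [← mul_assoc, ← mul_assoc]
      exact h2
    exact single_cancel h5
  -- the element F
  have hp0A : AddMonoidAlgebra.single p0 (1:k) ∈ conicA k d t n v :=
    Submodule.subset_span ⟨p0, hp0, rfl⟩
  set a0 : ↥(conicA k d t n v) := ⟨AddMonoidAlgebra.single p0 1, hp0A⟩ with ha0
  set F : L := ↑(φ a0) with hF
  have hFne : F ≠ 0 := by
    intro h0
    have h1 : φ a0 = 0 := Subtype.ext h0
    have h2 : a0 = 0 := by
      have := congrArg φ.symm h1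
      rw [φ.symm_apply_apply, map_zero] at this
      exact this
    exact single_ne p0 (congrArg Subtype.val h2)
  -- span equality
  have hspan : Submodule.map (LinearMap.mulLeft k F)
        (Submodule.span k (monSet k (latticePts n v)))
      = Submodule.map (LinearMap.mulLeft k (AddMonoidAlgebra.single p0 (1:k)))
        (Submodule.span k (monSet k (latticePts n w))) := by
    apply le_antisymm
    · rintro x ⟨g, hg, rfl⟩
      have hgA : g ∈ conicA k d t n v := (mem_conicA_iff n).2 hg
      have hkey := key ⟨g, hgA⟩ a0
      refine ⟨↑(φ ⟨g, hgA⟩), (mem_conicA_iff n).1 (φ ⟨g, hgA⟩).2, ?_⟩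
      show AddMonoidAlgebra.single p0 (1:k) * ↑(φ ⟨g, hgA⟩) = LinearMap.mulLeft k F g
      rw [LinearMap.mulLeft_apply]
      have h6 : (a0 : L) * ↑(φ ⟨g, hgA⟩) = g * F := hkey
      rw [mul_comm F g, ← h6]
    · rintro x ⟨b, hb, rfl⟩
      have hbA : b ∈ conicA k d t n w := (mem_conicA_iff n).2 hb
      set a : ↥(conicA k d t n v) := φ.symm ⟨b, hbA⟩ with ha
      have hφa : φ a = ⟨b, hbA⟩ := φ.apply_symm_apply _
      have hkey := key a a0
      refine ⟨(a : L), (mem_conicA_iff n).1 a.2, ?_⟩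
      show F * (a : L) = LinearMap.mulLeft k (AddMonoidAlgebra.single p0 (1:k)) b
      rw [LinearMap.mulLeft_apply]
      have h1 : (a0 : L) * ↑(φ a) = (a : L) * F := hkey
      have h2 : (↑(φ a) : L) = b := congrArg Subtype.val hφa
      rw [h2] at h1
      show F * (a : L) = AddMonoidAlgebra.single p0 (1:k) * b
      rw [mul_comm F (a : L), ← h1]
  -- F is a monomial
  have hq1mem : AddMonoidAlgebra.single (p0 + q0) (1:k)
      ∈ Submodule.map (LinearMap.mulLeft k (AddMonoidAlgebra.single p0 (1:k)))
        (Submodule.span k (monSet k (latticePts n w))) := by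
    refine ⟨AddMonoidAlgebra.single q0 1, Submodule.subset_span ⟨q0, hq0, rfl⟩, ?_⟩
    rw [LinearMap.mulLeft_apply, single_mul]
  rw [← hspan] at hq1mem
  obtain ⟨g, hg, hFg⟩ := hq1mem
  rw [LinearMap.mulLeft_apply] at hFg
  have hgne : g ≠ 0 := by
    rintro rfl
    rw [mul_zero] at hFg
    exact single_ne (p0 + q0) hFg.symm
  obtain ⟨e, c, hc, hFeq⟩ := single_of_mul_single hFne hgne hFg
  -- conclusion
  refine ⟨p0 - e, ?_⟩
  ext p
  constructor
  · intro hp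
    have hx : F * AddMonoidAlgebra.single p 1
        ∈ Submodule.map (LinearMap.mulLeft k F)
          (Submodule.span k (monSet k (latticePts n v))) :=
      ⟨AddMonoidAlgebra.single p 1, Submodule.subset_span ⟨p, hp, rfl⟩, rfl⟩
    rw [hspan] at hx
    obtain ⟨b, hb, hbe⟩ := hx
    rw [LinearMap.mulLeft_apply] at hbe
    have hFx : F * AddMonoidAlgebra.single p 1 = AddMonoidAlgebra.single (e + p) c := by
      rw [hFeq, AddMonoidAlgebra.single_mul_single, mul_one]
    rw [hFx] at hbe
    have hb2 : b = (1:k)⁻¹ • AddMonoidAlgebra.single (e + p - p0) c :=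
      mul_single_inv one_ne_zero hbe
    rw [inv_one, one_smul] at hb2
    rw [hb2] at hb
    have hb3 : AddMonoidAlgebra.single (e + p - p0) (1:k)
        ∈ Submodule.span k (monSet k (latticePts n w)) :=
      single_one_mem_of_single hc hb
    have hp' : e + p - p0 ∈ latticePts n w := single_mem_span_monSet_iff.1 hb3
    exact ⟨e + p - p0, hp', by show p0 - e + (e + p - p0) = p; abel⟩
  · rintro ⟨p', hp', rfl⟩
    have hx : AddMonoidAlgebra.single (p0 + p') (1:k)
        ∈ Submodule.map (LinearMap.mulLeft k (AddMonoidAlgebra.single p0 (1:k)))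
          (Submodule.span k (monSet k (latticePts n w))) := by
      refine ⟨AddMonoidAlgebra.single p' 1, Submodule.subset_span ⟨p', hp', rfl⟩, ?_⟩
      rw [LinearMap.mulLeft_apply, single_mul]
    rw [← hspan] at hx
    obtain ⟨g', hg', hge⟩ := hx
    rw [LinearMap.mulLeft_apply, hFeq] at hge
    have hg2 : g' = c⁻¹ • AddMonoidAlgebra.single (p0 + p' - e) 1 := mul_single_inv hc hge
    have hg3 : AddMonoidAlgebra.single (p0 + p' - e) (1:k)
        ∈ Submodule.span k (monSet k (latticePts n v)) := by
      have h4 := (Submodule.span k (monSet k (latticePts n v))).smul_mem c hg'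
      rw [hg2, smul_smul, mul_inv_cancel₀ hc, one_smul] at h4
      exact h4
    have hp2 : p0 + p' - e ∈ latticePts n v := single_mem_span_monSet_iff.1 hg3
    show p0 - e + p' ∈ latticePts n v
    have h7 : p0 - e + p' = p0 + p' - e := by abel
    rw [h7]
    exact hp2

end main

end Stmt7Aux

open Stmt7Aux in
/-- `A_v ≅ A_w` as `R`-modules iff the conic lattice set of `v` is a
lattice translate of the conic lattice set of `w`. -/
theorem stmt_7
    (d t : ℕ) (hd : 1 ≤ d)
    (n : Fin t → ((Fin d → ℝ) →ₗ[ℝ] ℝ))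
    (hne : ∀ i, n i ≠ 0)
    (hint : ∀ i (m : Fin d → ℤ), ∃ z : ℤ, n i (ιZ d m) = z)
    (hprim : ∀ i (z : ℤ), ∃ m : Fin d → ℤ, n i (ιZ d m) = z)
    (C : Set (Fin d → ℝ)) (hC : C = {x | ∀ i, 0 ≤ n i x})
    (hfull : (interior C).Nonempty)
    (hpointed : Submodule.span ℝ (Set.range n) = ⊤)
    (hirr : ∀ i, C ⊂ {x | ∀ j, j ≠ i → 0 ≤ n j x})
    (k : Type) [Field k] :
    ∀ v w : Fin d → ℝ,
      Nonempty (↥(conicA k d t n v) ≃ₗ[↥(toricR k d t n)] ↥(conicA k d t n w)) ↔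
      ∃ m : Fin d → ℤ, latticePts n v = (fun m' => m + m') '' latticePts n w := by
  rw [hC] at hfull
  intro v w
  constructor
  · rintro ⟨φ⟩
    exact hard_dir n hne hfull φ
  · rintro ⟨m, hm⟩
    exact easy_dir n m hm
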